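/- Consider the input affine system ẋ = f(x) + g(x)u, y = h(x). Suppose V : ℝⁿ → ℝ is differentiable with V(x) ≥ 0 for all x and V(0) = 0, and suppose there exist functions L : ℝⁿ → ℝⁿ and W : ℝⁿ → ℝ^{n×n} such that for all x ∈ ℝⁿ: (i) (1/2) g(x)ᵀ∇V(x) = Ŝ(x)ᵀ f(x) − W(x)ᵀ L(x), (ii) ∇V(x)ᵀ f(x) = f(x)ᵀ ∇h(x) Q ∇h(x)ᵀ f(x) − L(x)ᵀ L(x), (iii) R̂(x) = W(x)ᵀ W(x), where Ŝ(x) = ∇h(x) Q ∇h(x)ᵀ g(x) + ∇h(x) S and R̂(x) = g(x)ᵀ ∇h(x) Q ∇h(x)ᵀ g(x) + 2 g(x)ᵀ ∇h(x) S + R. Then for all x, u ∈ ℝⁿ, the differential dissipation inequality ∇V(x)ᵀ (f(x) + g(x)u) ≤ ω(u, ẏ) holds, where ẏ = ∇h(x)ᵀ (f(x) + g(x)u). -/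
import Mathlib


open Matrix

private lemma dm_aux {n : ℕ} (a : Fin n → ℝ) (A : Matrix (Fin n) (Fin n) ℝ) (b : Fin n → ℝ) :
    a ⬝ᵥ (A *ᵥ b) = (Aᵀ *ᵥ a) ⬝ᵥ b := by
  rw [Matrix.dotProduct_mulVec, Matrix.mulVec_transpose]

private lemma dswap_aux {n : ℕ} (a : Fin n → ℝ) (A : Matrix (Fin n) (Fin n) ℝ) (b : Fin n → ℝ) :
    a ⬝ᵥ (A *ᵥ b) = b ⬝ᵥ (Aᵀ *ᵥ a) := by
  rw [dm_aux, dotProduct_comm]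

/-- For the input affine system ẋ = f(x) + g(x)u, y = h(x), if a
nonnegative differentiable storage function `V` with `V 0 = 0` satisfies the
three algebraic identities of Theorem 3.3 (with factorization data `L`, `W`),
then the differential dissipation inequality
`∇V(x)ᵀ(f(x) + g(x)u) ≤ ω(u, ẏ)` holds for all `x`, `u`, where
`ẏ = ∇h(x)ᵀ(f(x) + g(x)u)` and `ω(u, ẏ) = ẏᵀQẏ + 2ẏᵀSu + uᵀRu`. -/
theorem dissipation_inequality_of_factorization {n : ℕ}
    (f : (Fin n → ℝ) → (Fin n → ℝ))
    (g : (Fin n → ℝ) → Matrix (Fin n) (Fin n) ℝ)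
    (h : (Fin n → ℝ) → (Fin n → ℝ))
    (hf0 : f 0 = 0) (hh0 : h 0 = 0)
    (Q S R : Matrix (Fin n) (Fin n) ℝ)
    (hQ : Q.IsSymm) (hR : R.IsSymm)
    (V : (Fin n → ℝ) → ℝ)
    (gradV : (Fin n → ℝ) → (Fin n → ℝ))
    (gradh : (Fin n → ℝ) → Matrix (Fin n) (Fin n) ℝ)
    (hVdiff : Differentiable ℝ V)
    (hVgrad : ∀ x v, fderiv ℝ V x v = gradV x ⬝ᵥ v)
    (hhdiff : Differentiable ℝ h)
    (hhgrad : ∀ x v, fderiv ℝ h x v = (gradh x)ᵀ *ᵥ v)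
    (hVnonneg : ∀ x, 0 ≤ V x) (hV0 : V 0 = 0)
    (L : (Fin n → ℝ) → (Fin n → ℝ))
    (W : (Fin n → ℝ) → Matrix (Fin n) (Fin n) ℝ)
    -- (i)  (1/2) g(x)ᵀ∇V(x) = Ŝ(x)ᵀ f(x) − W(x)ᵀ L(x)
    (hyp1 : ∀ x, (1/2 : ℝ) • ((g x)ᵀ *ᵥ gradV x)
      = (gradh x * Q * (gradh x)ᵀ * g x + gradh x * S)ᵀ *ᵥ f x - (W x)ᵀ *ᵥ L x)
    -- (ii) ∇V(x)ᵀ f(x) = f(x)ᵀ ∇h(x) Q ∇h(x)ᵀ f(x) − L(x)ᵀ L(x)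
    (hyp2 : ∀ x, gradV x ⬝ᵥ f x
      = f x ⬝ᵥ ((gradh x * Q * (gradh x)ᵀ) *ᵥ f x) - L x ⬝ᵥ L x)
    -- (iii) R̂(x) = W(x)ᵀ W(x)
    (hyp3 : ∀ x, (g x)ᵀ * gradh x * Q * (gradh x)ᵀ * g x
        + (2 : ℝ) • ((g x)ᵀ * gradh x * S) + R = (W x)ᵀ * W x) :
    ∀ x u : Fin n → ℝ,
      gradV x ⬝ᵥ (f x + g x *ᵥ u) ≤
        ((gradh x)ᵀ *ᵥ (f x + g x *ᵥ u)) ⬝ᵥ (Q *ᵥ ((gradh x)ᵀ *ᵥ (f x + g x *ᵥ u)))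
          + 2 * (((gradh x)ᵀ *ᵥ (f x + g x *ᵥ u)) ⬝ᵥ (S *ᵥ u))
          + u ⬝ᵥ (R *ᵥ u) := by
  intro x u
  have hyp1 := hyp1 x
  have hyp2 := hyp2 x
  have hyp3 := hyp3 x
  have h1 := congrArg (fun z => z ⬝ᵥ u) hyp1
  have h3 := congrArg (fun A => u ⬝ᵥ (A *ᵥ u)) hyp3
  have nonneg : (0:ℝ) ≤ (L x + W x *ᵥ u) ⬝ᵥ (L x + W x *ᵥ u) := by
    simp only [dotProduct]
    exact Finset.sum_nonneg fun i _ => mul_self_nonneg _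
  have B1 : u ⬝ᵥ (((g x)ᵀ * (gradh x * (Q * (gradh x)ᵀ))) *ᵥ f x)
      = f x ⬝ᵥ ((gradh x * (Q * ((gradh x)ᵀ * g x))) *ᵥ u) := by
    rw [dswap_aux]
    congr 1
    simp [Matrix.transpose_mul, Matrix.mul_assoc, hQ.eq]
  have B3 : u ⬝ᵥ ((W x)ᵀ *ᵥ L x) = L x ⬝ᵥ (W x *ᵥ u) := by
    rw [dswap_aux, Matrix.transpose_transpose]
  simp only [Matrix.mulVec_add, Matrix.add_mulVec, Matrix.sub_mulVec,
    dotProduct_add, add_dotProduct, sub_dotProduct, dotProduct_sub,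
    smul_dotProduct, dotProduct_smul, Matrix.smul_mulVec,
    Matrix.mulVec_mulVec, dm_aux, Matrix.transpose_mul, Matrix.transpose_transpose,
    Matrix.transpose_add, Matrix.mul_assoc, smul_eq_mul, hQ.eq, hR.eq] at h1 h3 nonneg B1 B3 hyp2 ⊢
  linarith [h1, h3, nonneg, B1, B3, hyp2]
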